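/- With H^ε and (V,g_V) as above and dim V > 2, every SO(H^ε) × SO(V)-equivariant endomorphism I of W^ε = H^ε ⊗ V with I² = ±Id and I ≠ ±Id equals ±(I_H ⊗ 1); in particular I² = −ε·Id, so W^+ carries (up to sign) a unique invariant complex structure and W^- a unique invariant para-complex structure. -/

import Mathlib

/-!
STATEMENT 12: With H^ε and (V,g_V) as in Statement 10 and dim V = m > 2, every
SO(H^ε) × SO(V)-equivariant endomorphism I of W^ε = H^ε ⊗ V with I² = ±Id and I ≠ ±Id
equals ±(I_H ⊗ 1); in particular I² = −ε·Id, so W^+ carries (up to sign) a unique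
invariant complex structure and W^− a unique invariant para-complex structure.

In the identification H^ε ⊗ V ≅ V × V, (I_H ⊗ 1)(x,y) = (−ε y, x).
-/

open Matrix
open scoped BigOperators

noncomputable section

def gH (e : ℝ) (a b : Fin 2 → ℝ) : ℝ := a 0 * b 0 + e * (a 1 * b 1)

def gV {m : ℕ} (s : Fin m → ℝ) (x y : Fin m → ℝ) : ℝ := ∑ i, s i * x i * y i

def SOH (e : ℝ) : Set (Matrix (Fin 2) (Fin 2) ℝ) :=
  connectedComponentIn {M | ∀ a b, gH e (M.mulVec a) (M.mulVec b) = gH e a b} 1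

def SOV {m : ℕ} (s : Fin m → ℝ) : Set (Matrix (Fin m) (Fin m) ℝ) :=
  connectedComponentIn {A | ∀ x y, gV s (A.mulVec x) (A.mulVec y) = gV s x y} 1

def tact {m : ℕ} (M : Matrix (Fin 2) (Fin 2) ℝ) (A : Matrix (Fin m) (Fin m) ℝ)
    (z : (Fin m → ℝ) × (Fin m → ℝ)) : (Fin m → ℝ) × (Fin m → ℝ) :=
  (M 0 0 • A.mulVec z.1 + M 0 1 • A.mulVec z.2,
   M 1 0 • A.mulVec z.1 + M 1 1 • A.mulVec z.2)

section Helpers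

variable {m : ℕ}

def Gm (s : Fin m → ℝ) (i j : Fin m) (F G : ℝ) : Matrix (Fin m) (Fin m) ℝ :=
  1 + (F - 1) • (single i i 1 + single j j 1)
    + G • single j i 1 + (-(s i * s j) * G) • single i j 1

lemma Gm_mulVec_apply (s : Fin m → ℝ) {i j : Fin m} (hij : i ≠ j) (F G : ℝ)
    (x : Fin m → ℝ) (k : Fin m) :
    (Gm s i j F G).mulVec x k =
      if k = i then F * x i - (s i * s j) * G * x j
      else if k = j then G * x i + F * x j else x k := by
  simp only [Gm, add_mulVec, smul_mulVec, one_mulVec, single_mulVec,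
    Pi.add_apply, Pi.smul_apply, Function.update_apply, Pi.zero_apply, smul_eq_mul, one_mul]
  split_ifs with h1 h2 <;> simp_all <;> ring

lemma Gm_one (s : Fin m → ℝ) (i j : Fin m) : Gm s i j 1 0 = 1 := by
  simp [Gm]

lemma Gm_isometry (s : Fin m → ℝ) (hs : ∀ i, s i = 1 ∨ s i = -1) {i j : Fin m} (hij : i ≠ j)
    (F G : ℝ) (hFG : F ^ 2 + (s i * s j) * G ^ 2 = 1) :
    ∀ x y, gV s ((Gm s i j F G).mulVec x) ((Gm s i j F G).mulVec y) = gV s x y := by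
  have key : ∀ x y : Fin m → ℝ,
      gV s x y = s i * x i * y i + s j * x j * y j + ∑ k ∈ ({i, j} : Finset (Fin m))ᶜ,
        s k * x k * y k := by
    intro x y
    rw [gV, ← Finset.sum_compl_add_sum ({i, j} : Finset (Fin m)), Finset.sum_pair hij]
    ring
  intro x y
  rw [key, key x y]
  have hrest : ∀ k ∈ ({i, j} : Finset (Fin m))ᶜ,
      s k * ((Gm s i j F G).mulVec x k) * ((Gm s i j F G).mulVec y k) = s k * x k * y k := by
    intro k hk
    simp only [Finset.mem_compl, Finset.mem_insert, Finset.mem_singleton, not_or] at hk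
    rw [Gm_mulVec_apply s hij, Gm_mulVec_apply s hij, if_neg hk.1, if_neg hk.2,
      if_neg hk.1, if_neg hk.2]
  rw [Finset.sum_congr rfl hrest]
  rw [Gm_mulVec_apply s hij, Gm_mulVec_apply s hij, Gm_mulVec_apply s hij, Gm_mulVec_apply s hij,
    if_pos rfl, if_pos rfl, if_neg hij.symm, if_pos rfl, if_neg hij.symm, if_pos rfl]
  have hu : s i ^ 2 = 1 := by rcases hs i with h | h <;> rw [h] <;> norm_num
  linear_combination (s i * x i * y i + s j * x j * y j) * hFG +
    (s i * s j ^ 2 * G ^ 2 * x j * y j - s j * G ^ 2 * x i * y i -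
      s j * F * G * (x i * y j + x j * y i)) * hu

lemma Gm_continuous (s : Fin m → ℝ) (i j : Fin m) {f g : ℝ → ℝ}
    (hf : Continuous f) (hg : Continuous g) :
    Continuous fun t => Gm s i j (f t) (g t) := by
  unfold Gm
  exact (((continuous_const.add (((hf.sub continuous_const)).smul continuous_const)).add
    (hg.smul continuous_const)).add ((continuous_const.mul hg).smul continuous_const))

lemma mem_SOV_Gm (s : Fin m → ℝ) (hs : ∀ i, s i = 1 ∨ s i = -1) {i j : Fin m} (hij : i ≠ j)
    {f g : ℝ → ℝ} (hf : Continuous f) (hg : Continuous g) (hf0 : f 0 = 1) (hg0 : g 0 = 0)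
    (hp : ∀ t, f t ^ 2 + (s i * s j) * g t ^ 2 = 1) (t : ℝ) :
    Gm s i j (f t) (g t) ∈ SOV s := by
  set F : Set (Matrix (Fin m) (Fin m) ℝ) :=
    {A | ∀ x y, gV s (A.mulVec x) (A.mulVec y) = gV s x y} with hF
  have hsub : (fun u => Gm s i j (f u) (g u)) '' Set.uIcc 0 t ⊆ F := by
    rintro _ ⟨u, -, rfl⟩
    exact Gm_isometry s hs hij (f u) (g u) (hp u)
  have hpre : IsPreconnected ((fun u => Gm s i j (f u) (g u)) '' Set.uIcc 0 t) :=
    isPreconnected_uIcc.image _ (Gm_continuous s i j hf hg).continuousOn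
  have h1 : (1 : Matrix (Fin m) (Fin m) ℝ) ∈ (fun u => Gm s i j (f u) (g u)) '' Set.uIcc 0 t :=
    ⟨0, Set.left_mem_uIcc, by simp only []; rw [hf0, hg0, Gm_one]⟩
  exact hpre.subset_connectedComponentIn h1 hsub ⟨t, Set.right_mem_uIcc, rfl⟩

lemma exists_fg (c : ℝ) (hc : c = 1 ∨ c = -1) :
    ∃ f g : ℝ → ℝ, Continuous f ∧ Continuous g ∧ f 0 = 1 ∧ g 0 = 0 ∧
      (∀ t, f t ^ 2 + c * g t ^ 2 = 1) ∧
      ∃ t₀, g t₀ ≠ 0 ∧ f (-t₀) = f t₀ ∧ g (-t₀) = -g t₀ := by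
  rcases hc with rfl | rfl
  · exact ⟨Real.cos, Real.sin, Real.continuous_cos, Real.continuous_sin, Real.cos_zero,
      Real.sin_zero, fun t => by have := Real.sin_sq_add_cos_sq t; linarith,
      Real.pi / 2, ⟨by rw [Real.sin_pi_div_two]; norm_num, Real.cos_neg _, Real.sin_neg _⟩⟩
  · exact ⟨Real.cosh, Real.sinh, Real.continuous_cosh, Real.continuous_sinh, Real.cosh_zero,
      Real.sinh_zero, fun t => by have := Real.cosh_sq_sub_sinh_sq t; linarith,
      1, ⟨ne_of_gt (by rw [Real.sinh_pos_iff]; norm_num), Real.cosh_neg _, Real.sinh_neg _⟩⟩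

def Lv (s : Fin m → ℝ) (i j : Fin m) (x : Fin m → ℝ) : Fin m → ℝ :=
  fun k => if k = i then -(s i * s j) * x j else if k = j then x i else 0

lemma comm_Lv (s : Fin m → ℝ) (hs : ∀ i, s i = 1 ∨ s i = -1)
    (a : (Fin m → ℝ) →ₗ[ℝ] (Fin m → ℝ))
    (ha : ∀ A ∈ SOV s, ∀ x, a (A.mulVec x) = A.mulVec (a x))
    {i j : Fin m} (hij : i ≠ j) (x : Fin m → ℝ) :
    a (Lv s i j x) = Lv s i j (a x) := by
  have hc : s i * s j = 1 ∨ s i * s j = -1 := by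
    rcases hs i with h | h <;> rcases hs j with h' | h' <;> rw [h, h'] <;> norm_num
  obtain ⟨f, g, hf, hg, hf0, hg0, hp, t₀, hgt, hfe, hgo⟩ := exists_fg _ hc
  have h1 := ha _ (mem_SOV_Gm s hs hij hf hg hf0 hg0 hp t₀)
  have h2 := ha _ (mem_SOV_Gm s hs hij hf hg hf0 hg0 hp (-t₀))
  have hD : ∀ y : Fin m → ℝ,
      (Gm s i j (f t₀) (g t₀)).mulVec y - (Gm s i j (f (-t₀)) (g (-t₀))).mulVec y
        = (2 * g t₀) • Lv s i j y := by
    intro y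
    funext k
    rw [hfe, hgo]
    simp only [Pi.sub_apply, Gm_mulVec_apply s hij, Pi.smul_apply, Lv, smul_eq_mul]
    split_ifs <;> ring
  have key : a ((2 * g t₀) • Lv s i j x) = (2 * g t₀) • Lv s i j (a x) := by
    rw [← hD x, map_sub, h1, h2, hD (a x)]
  rw [LinearMap.map_smul] at key
  have h2g : (2 * g t₀) ≠ 0 := by simpa using hgt
  exact smul_right_injective _ h2g key

lemma schur (hm : 2 < m) (s : Fin m → ℝ) (hs : ∀ i, s i = 1 ∨ s i = -1)
    (a : (Fin m → ℝ) →ₗ[ℝ] (Fin m → ℝ))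
    (ha : ∀ A ∈ SOV s, ∀ x, a (A.mulVec x) = A.mulVec (a x)) :
    ∃ α : ℝ, ∀ x, a x = α • x := by
  have hcomm : ∀ (i j : Fin m), i ≠ j → ∀ x, a (Lv s i j x) = Lv s i j (a x) :=
    fun i j hij x => comm_Lv s hs a ha hij x
  -- off-diagonal entries vanish
  have claim0 : ∀ k i : Fin m, i ≠ k → a (Pi.single k 1) i = 0 := by
    intro k i hik
    have hex : ∃ j : Fin m, j ≠ i ∧ j ≠ k := by
      by_contra h
      push_neg at h
      have hsubset : (Finset.univ : Finset (Fin m)) ⊆ {i, k} := by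
        intro l _
        rcases eq_or_ne l i with rfl | hl
        · simp
        · simp [h l hl]
      have := Finset.card_le_card hsubset
      simp only [Finset.card_univ, Fintype.card_fin] at this
      have h2 : ({i, k} : Finset (Fin m)).card ≤ 2 :=
        (Finset.card_insert_le _ _).trans (by simp)
      omega
    obtain ⟨j, hji, hjk⟩ := hex
    have h := hcomm i j hji.symm (Pi.single k 1)
    have hLz : Lv s i j (Pi.single k (1:ℝ)) = 0 := by
      funext l
      simp only [Lv, Pi.single_eq_of_ne hjk, Pi.single_eq_of_ne hik, Pi.zero_apply]
      split_ifs <;> ring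
    rw [hLz, map_zero] at h
    have h2 := congrFun h.symm j
    simp only [Lv, if_neg hji, if_pos rfl, Pi.zero_apply] at h2
    exact h2
  -- diagonal entries coincide
  have claim1 : ∀ i j : Fin m, i ≠ j → a (Pi.single j 1) j = a (Pi.single i 1) i := by
    intro i j hij
    have h := hcomm i j hij (Pi.single i 1)
    have hLz : Lv s i j (Pi.single i (1:ℝ)) = Pi.single j 1 := by
      funext l
      simp only [Lv]
      rcases eq_or_ne l i with rfl | hli
      · rw [if_pos rfl, Pi.single_eq_of_ne hij.symm, Pi.single_eq_of_ne hij]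
        ring
      · rcases eq_or_ne l j with rfl | hlj
        · rw [if_neg hli, if_pos rfl, Pi.single_eq_same, Pi.single_eq_same]
        · rw [if_neg hli, if_neg hlj, Pi.single_eq_of_ne hlj]
    rw [hLz] at h
    have h2 := congrFun h j
    simp only [Lv, if_neg hij.symm, if_pos rfl] at h2
    exact h2
  set i₀ : Fin m := ⟨0, by omega⟩ with hi₀
  have hα : ∀ k : Fin m, a (Pi.single k 1) = (a (Pi.single i₀ 1) i₀) • (Pi.single k 1 : Fin m → ℝ) := by
    intro k
    funext l
    rcases eq_or_ne l k with rfl | hlk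
    · rw [Pi.smul_apply, Pi.single_eq_same, smul_eq_mul, mul_one]
      rcases eq_or_ne l i₀ with rfl | h0
      · rfl
      · exact claim1 i₀ l (Ne.symm h0)
    · rw [claim0 k l hlk, Pi.smul_apply, Pi.single_eq_of_ne hlk, smul_zero]
  obtain ⟨α, hα⟩ : ∃ α : ℝ, ∀ k : Fin m,
      a (Pi.single k 1) = α • (Pi.single k 1 : Fin m → ℝ) := ⟨_, hα⟩
  refine ⟨α, fun x => ?_⟩
  have hx : x = ∑ k, x k • (Pi.single k (1:ℝ) : Fin m → ℝ) := by
    funext l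
    rw [Finset.sum_apply]
    simp only [Pi.smul_apply, Pi.single_apply, smul_eq_mul, mul_ite, mul_one, mul_zero]
    simp [Finset.sum_ite_eq, Finset.sum_ite_eq']
  conv_lhs => rw [hx]
  rw [map_sum]
  simp only [LinearMap.map_smul, hα]
  conv_rhs => rw [hx]
  rw [Finset.smul_sum]
  exact Finset.sum_congr rfl fun k _ => smul_comm _ _ _

def MH (e F G : ℝ) : Matrix (Fin 2) (Fin 2) ℝ :=
  1 + (F - 1) • (single 0 0 1 + single 1 1 1)
    + G • single 1 0 1 + (-(e * G)) • single 0 1 1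

lemma MH_00 (e F G : ℝ) : MH e F G 0 0 = F := by
  simp [MH, single, Matrix.one_apply]

lemma MH_01 (e F G : ℝ) : MH e F G 0 1 = -(e * G) := by
  simp [MH, single, Matrix.one_apply]

lemma MH_10 (e F G : ℝ) : MH e F G 1 0 = G := by
  simp [MH, single, Matrix.one_apply]

lemma MH_11 (e F G : ℝ) : MH e F G 1 1 = F := by
  simp [MH, single, Matrix.one_apply]

lemma MH_one (e : ℝ) : MH e 1 0 = 1 := by
  simp [MH]

lemma MH_isometry (e : ℝ) (he : e = 1 ∨ e = -1) (F G : ℝ) (hFG : F ^ 2 + e * G ^ 2 = 1) :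
    ∀ a b, gH e ((MH e F G).mulVec a) ((MH e F G).mulVec b) = gH e a b := by
  intro a b
  have he2 : e ^ 2 = 1 := by rcases he with h | h <;> rw [h] <;> norm_num
  simp only [gH, mulVec, dotProduct, Fin.sum_univ_two, MH_00, MH_01, MH_10, MH_11]
  linear_combination (a 0 * b 0 + e * a 1 * b 1) * hFG

lemma MH_continuous (e : ℝ) {f g : ℝ → ℝ} (hf : Continuous f) (hg : Continuous g) :
    Continuous fun t => MH e (f t) (g t) := by
  unfold MH
  exact (((continuous_const.add (((hf.sub continuous_const)).smul continuous_const)).add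
    (hg.smul continuous_const)).add
    (((continuous_const.mul hg).neg).smul continuous_const))

lemma mem_SOH_MH (e : ℝ) (he : e = 1 ∨ e = -1) {f g : ℝ → ℝ}
    (hf : Continuous f) (hg : Continuous g) (hf0 : f 0 = 1) (hg0 : g 0 = 0)
    (hp : ∀ t, f t ^ 2 + e * g t ^ 2 = 1) (t : ℝ) :
    MH e (f t) (g t) ∈ SOH e := by
  have hsub : (fun u => MH e (f u) (g u)) '' Set.uIcc 0 t ⊆
      {M | ∀ a b, gH e (M.mulVec a) (M.mulVec b) = gH e a b} := by
    rintro _ ⟨u, -, rfl⟩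
    exact MH_isometry e he (f u) (g u) (hp u)
  have hpre : IsPreconnected ((fun u => MH e (f u) (g u)) '' Set.uIcc 0 t) :=
    isPreconnected_uIcc.image _ (MH_continuous e hf hg).continuousOn
  have h1 : (1 : Matrix (Fin 2) (Fin 2) ℝ) ∈ (fun u => MH e (f u) (g u)) '' Set.uIcc 0 t :=
    ⟨0, Set.left_mem_uIcc, by simp only []; rw [hf0, hg0, MH_one]⟩
  exact hpre.subset_connectedComponentIn h1 hsub ⟨t, Set.right_mem_uIcc, rfl⟩

lemma one_mem_SOH (e : ℝ) : (1 : Matrix (Fin 2) (Fin 2) ℝ) ∈ SOH e :=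
  mem_connectedComponentIn (by intro a b; rw [one_mulVec, one_mulVec])

lemma one_mem_SOV (s : Fin m → ℝ) : (1 : Matrix (Fin m) (Fin m) ℝ) ∈ SOV s :=
  mem_connectedComponentIn (by intro x y; rw [one_mulVec, one_mulVec])

lemma tact_one {m : ℕ} (A : Matrix (Fin m) (Fin m) ℝ) (z : (Fin m → ℝ) × (Fin m → ℝ)) :
    tact 1 A z = (A.mulVec z.1, A.mulVec z.2) := by
  simp [tact, Matrix.one_apply]

end Helpers

theorem invariant_complex_structure_unique
    (m : ℕ) (hm : 2 < m) (e : ℝ) (he : e = 1 ∨ e = -1)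
    (s : Fin m → ℝ) (hs : ∀ i, s i = 1 ∨ s i = -1)
    (T : ((Fin m → ℝ) × (Fin m → ℝ)) →ₗ[ℝ] ((Fin m → ℝ) × (Fin m → ℝ)))
    (hT : ∀ M ∈ SOH e, ∀ A ∈ SOV s, ∀ z, T (tact M A z) = tact M A (T z))
    (hsq : (∀ z, T (T z) = z) ∨ (∀ z, T (T z) = -z))
    (hne : T ≠ LinearMap.id) (hne' : T ≠ -LinearMap.id) :
    ((∀ z : (Fin m → ℝ) × (Fin m → ℝ), T z = ((-e) • z.2, z.1)) ∨
      (∀ z : (Fin m → ℝ) × (Fin m → ℝ), T z = (e • z.2, -z.1))) ∧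
    (∀ z, T (T z) = (-e) • z) := by
  -- Step 1: T commutes with the complex/para-complex structure coming from H
  have hS : ∀ z : (Fin m → ℝ) × (Fin m → ℝ),
      T ((-e) • z.2, z.1) = ((-e) • (T z).2, (T z).1) := by
    intro z
    obtain ⟨f, g, hf, hg, hf0, hg0, hp, t₀, hgt, hfe, hgo⟩ := exists_fg e he
    have h1 := hT _ (mem_SOH_MH e he hf hg hf0 hg0 hp t₀) 1 (one_mem_SOV s) z
    have h2 := hT _ (mem_SOH_MH e he hf hg hf0 hg0 hp (-t₀)) 1 (one_mem_SOV s) z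
    simp only [tact, one_mulVec, MH_00, MH_01, MH_10, MH_11] at h1 h2
    rw [hfe, hgo] at h2
    have hu : (f t₀ • z.1 + -(e * g t₀) • z.2, g t₀ • z.1 + f t₀ • z.2)
        - (f t₀ • z.1 + -(e * -g t₀) • z.2, -g t₀ • z.1 + f t₀ • z.2)
        = (2 * g t₀) • (((-e) • z.2 : Fin m → ℝ), z.1) := by
      apply Prod.ext <;> simp only [Prod.fst_sub, Prod.snd_sub, Prod.smul_fst, Prod.smul_snd]
        <;> module
    have hv : (f t₀ • (T z).1 + -(e * g t₀) • (T z).2, g t₀ • (T z).1 + f t₀ • (T z).2)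
        - (f t₀ • (T z).1 + -(e * -g t₀) • (T z).2, -g t₀ • (T z).1 + f t₀ • (T z).2)
        = (2 * g t₀) • (((-e) • (T z).2 : Fin m → ℝ), (T z).1) := by
      apply Prod.ext <;> simp only [Prod.fst_sub, Prod.snd_sub, Prod.smul_fst, Prod.smul_snd]
        <;> module
    have key : T ((2 * g t₀) • (((-e) • z.2 : Fin m → ℝ), z.1))
        = (2 * g t₀) • (((-e) • (T z).2 : Fin m → ℝ), (T z).1) := by
      rw [← hu, map_sub, h1, h2, hv]
    rw [LinearMap.map_smul] at key
    exact smul_right_injective _ (by simpa using hgt) key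
  -- Step 2: the two block components of T
  set a : (Fin m → ℝ) →ₗ[ℝ] (Fin m → ℝ) :=
    (LinearMap.fst ℝ (Fin m → ℝ) (Fin m → ℝ)) ∘ₗ
      (T ∘ₗ (LinearMap.inl ℝ (Fin m → ℝ) (Fin m → ℝ))) with ha_def
  set c : (Fin m → ℝ) →ₗ[ℝ] (Fin m → ℝ) :=
    (LinearMap.snd ℝ (Fin m → ℝ) (Fin m → ℝ)) ∘ₗ
      (T ∘ₗ (LinearMap.inl ℝ (Fin m → ℝ) (Fin m → ℝ))) with hc_def
  have ha_app : ∀ x, a x = (T (x, 0)).1 := fun x => rfl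
  have hc_app : ∀ x, c x = (T (x, 0)).2 := fun x => rfl
  have hcommA : ∀ A ∈ SOV s, ∀ x, a (A.mulVec x) = A.mulVec (a x) := by
    intro A hA x
    have h := hT 1 (one_mem_SOH e) A hA (x, 0)
    rw [tact_one, tact_one, mulVec_zero] at h
    rw [ha_app, ha_app, h]
  have hcommC : ∀ A ∈ SOV s, ∀ x, c (A.mulVec x) = A.mulVec (c x) := by
    intro A hA x
    have h := hT 1 (one_mem_SOH e) A hA (x, 0)
    rw [tact_one, tact_one, mulVec_zero] at h
    rw [hc_app, hc_app, h]
  obtain ⟨α, hα⟩ := schur hm s hs a hcommA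
  obtain ⟨γ, hγc⟩ := schur hm s hs c hcommC
  -- Step 3: the explicit form of T
  have hT10 : ∀ x : Fin m → ℝ, T (x, 0) = (α • x, γ • x) := by
    intro x
    apply Prod.ext
    · rw [← ha_app, hα]
    · rw [← hc_app, hγc]
  have hT01 : ∀ y : Fin m → ℝ, T (0, y) = ((-e) • (γ • y), α • y) := by
    intro y
    have h := hS (y, 0)
    simp only [smul_zero] at h
    rw [hT10] at h
    exact h
  have hTform : ∀ x y : Fin m → ℝ, T (x, y) = (α • x + (-e) • (γ • y), γ • x + α • y) := by
    intro x y
    have : (x, y) = ((x, (0:Fin m → ℝ)) + ((0:Fin m → ℝ), y)) := by simp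
    rw [this, map_add, hT10, hT01]
    rfl
  -- Step 4: the sign σ
  obtain ⟨σ, hσ1, hσT⟩ : ∃ σ : ℝ, (σ = 1 ∨ σ = -1) ∧ ∀ z, T (T z) = σ • z := by
    rcases hsq with h | h
    · exact ⟨1, Or.inl rfl, fun z => by rw [h z, one_smul]⟩
    · exact ⟨-1, Or.inr rfl, fun z => by rw [h z, neg_one_smul]⟩
  -- Step 5: extract scalar equations
  set i₀ : Fin m := ⟨0, by omega⟩ with hi₀
  have hTT := hσT ((Pi.single i₀ 1 : Fin m → ℝ), 0)
  rw [hT10, hTform] at hTT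
  have h1 := congrFun (congrArg Prod.fst hTT) i₀
  have h2 := congrFun (congrArg Prod.snd hTT) i₀
  simp only [Pi.add_apply, Pi.smul_apply, Pi.single_eq_same, smul_eq_mul, mul_one,
    Prod.smul_fst, Prod.smul_snd, Pi.zero_apply, mul_zero, smul_zero] at h1 h2
  -- h1 : α * α + -e * (γ * γ) = σ ; h2 : γ * α + α * γ = 0
  have hαγ : α * γ = 0 := by linarith
  by_cases hγ : γ = 0
  · exfalso
    subst hγ
    have hαα : α * α = σ := by linarith [h1]
    have hTid : ∀ z : (Fin m → ℝ) × (Fin m → ℝ), T z = α • z := by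
      rintro ⟨x, y⟩
      rw [hTform]
      apply Prod.ext <;>
        simp only [Prod.smul_fst, Prod.smul_snd] <;> module
    rcases hσ1 with hσ | hσ
    · rw [hσ] at hαα
      rcases mul_self_eq_one_iff.mp hαα with hα1 | hα1
      · exact hne (LinearMap.ext fun z => by rw [hTid z, hα1, one_smul]; rfl)
      · exact hne' (LinearMap.ext fun z => by
          rw [hTid z, hα1, neg_one_smul]; rfl)
    · rw [hσ] at hαα
      nlinarith [mul_self_nonneg α]
  · have hα0 : α = 0 := by
      rcases mul_eq_zero.mp hαγ with h | h
      · exact h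
      · exact absurd h hγ
    rw [hα0] at h1
    have hγγ : γ * γ = 1 ∧ σ = -e := by
      rcases he with he1 | he1 <;> rcases hσ1 with hσ | hσ <;> rw [he1, hσ] at h1 ⊢ <;>
        constructor <;> nlinarith [mul_self_nonneg γ]
    rcases mul_self_eq_one_iff.mp hγγ.1 with hγ1 | hγ1
    · refine ⟨Or.inl fun z => ?_, fun z => by rw [hσT z, hγγ.2]⟩
      obtain ⟨x, y⟩ := z
      rw [hTform, hα0, hγ1]
      apply Prod.ext <;> simp only [Prod.smul_fst, Prod.smul_snd] <;> module
    · refine ⟨Or.inr fun z => ?_, fun z => by rw [hσT z, hγγ.2]⟩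
      obtain ⟨x, y⟩ := z
      rw [hTform, hα0, hγ1]
      apply Prod.ext <;> simp only [Prod.smul_fst, Prod.smul_snd] <;> module
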